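/- Let P ⊆ ℝⁿ be finite, let D be a probability distribution on P with D(p) > 0 for every p ∈ P, let A be a finite label set with |A| ≥ 2, and let c : P × A → ℝ be a payoff function. Suppose there exists an extreme point p̃ of the convex hull of P at which c(p̃, ·) is not constant on A. Then there exists a single-threshold linear classifier h with Σ_{p∈P} D(p)·c(p, h(p)) > Σ_{p∈P} D(p)·(1/|A|)·Σ_{a∈A} c(p, a); that is, some single-threshold classifier strictly outperforms the uniform random guesser in expected payoff. -/

import Mathlib

/-- A single-threshold (linear) classifier on ℝⁿ with values in `A`. -/
def IsSingleThreshold {n : ℕ} {A : Type*} (h : (Fin n → ℝ) → A) : Prop :=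
  ∃ (aPlus aMinus : A) (lam : Fin n → ℝ) (om : ℝ),
    ∀ p, h p = if om ≤ ∑ i, lam i * p i then aPlus else aMinus

/-- If `D` is a strictly positive distribution on a finite `P ⊆ ℝⁿ`, `A` a finite label
set with at least two labels, and `c` a payoff function which is not constant in the
label at some extreme point `p̃` of the convex hull of `P`, then some single-threshold
classifier strictly outperforms the uniform random guesser in expected payoff. -/
theorem single_threshold_beats_random_guesser {n : ℕ} {A : Type*} [Fintype A]
    (hA : 2 ≤ Fintype.card A)
    (P : Finset (Fin n → ℝ))
    (D : (Fin n → ℝ) → ℝ) (hD0 : ∀ p ∈ P, 0 < D p) (hD1 : ∑ p ∈ P, D p = 1)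
    (c : (Fin n → ℝ) → A → ℝ)
    (ptil : Fin n → ℝ) (hmem : ptil ∈ P)
    (hext : ptil ∈ Set.extremePoints ℝ (convexHull ℝ (P : Set (Fin n → ℝ))))
    (hnc : ∃ a b : A, c ptil a ≠ c ptil b) :
    ∃ h : (Fin n → ℝ) → A, IsSingleThreshold h ∧
      ∑ p ∈ P, D p * ((1 / (Fintype.card A : ℝ)) * ∑ a, c p a) <
        ∑ p ∈ P, D p * c p (h p) := by
  classical
  have hAne : Nonempty A := Fintype.card_pos_iff.mp (by omega)
  have hcard : (0:ℝ) < (Fintype.card A : ℝ) := by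
    have : 0 < Fintype.card A := by omega
    exact_mod_cast this
  -- separate ptil from the rest of P
  have hnot : ptil ∉ convexHull ℝ ((P.erase ptil : Finset _) : Set (Fin n → ℝ)) := by
    have h1 := ((convex_convexHull ℝ (P : Set (Fin n → ℝ))).mem_extremePoints_iff_mem_diff_convexHull_diff).mp hext
    intro hc
    apply h1.2
    refine convexHull_mono ?_ hc
    intro x hx
    simp only [Finset.coe_erase, Set.mem_diff, Set.mem_singleton_iff] at hx ⊢
    exact ⟨subset_convexHull ℝ _ hx.1, hx.2⟩
  obtain ⟨f, u, hfu, hup⟩ :=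
    geometric_hahn_banach_closed_point
      (convex_convexHull ℝ _)
      ((P.erase ptil).finite_toSet.isClosed_convexHull (𝕜 := ℝ)) hnot
  -- choose labels
  obtain ⟨aPlus, -, haPlus⟩ :=
    Finset.exists_max_image Finset.univ (c ptil) ⟨Classical.arbitrary A, Finset.mem_univ _⟩
  obtain ⟨aMinus, -, haMinus⟩ :=
    Finset.exists_max_image Finset.univ (fun a => ∑ p ∈ P.erase ptil, D p * c p a)
      ⟨Classical.arbitrary A, Finset.mem_univ _⟩
  set h : (Fin n → ℝ) → A := fun p => if u ≤ f p then aPlus else aMinus with hh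
  refine ⟨h, ?_, ?_⟩
  · refine ⟨aPlus, aMinus, fun i => f (fun j => if i = j then 1 else 0), u, fun p => ?_⟩
    have h0 : f p = (f : (Fin n → ℝ) →ₗ[ℝ] ℝ) p := rfl
    have hfp : (∑ i, f (fun j => if i = j then (1:ℝ) else 0) * p i) = f p := by
      rw [h0, LinearMap.pi_apply_eq_sum_univ]
      exact Finset.sum_congr rfl fun i _ => by rw [smul_eq_mul, mul_comm]; rfl
    rw [hfp]
  · have hhp : h ptil = aPlus := by simp [hh, le_of_lt hup]
    have hhq : ∀ p ∈ P.erase ptil, h p = aMinus := by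
      intro p hp
      have : f p < u := hfu p (subset_convexHull ℝ _ (by exact_mod_cast hp))
      simp [hh, not_le.mpr this]
    rw [← Finset.add_sum_erase _ _ hmem, ← Finset.add_sum_erase _ _ hmem]
    have key1 : D ptil * ((1 / (Fintype.card A : ℝ)) * ∑ a, c ptil a)
        < D ptil * c ptil (h ptil) := by
      rw [hhp]
      refine mul_lt_mul_of_pos_left ?_ (hD0 ptil hmem)
      have hsum : (∑ a, c ptil a) < (Fintype.card A : ℝ) * c ptil aPlus := by
        obtain ⟨a, b, hab⟩ := hnc
        have hlt : ∃ x ∈ (Finset.univ : Finset A), c ptil x < c ptil aPlus := by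
          by_contra hcon
          push_neg at hcon
          have ha' : c ptil a = c ptil aPlus :=
            le_antisymm (haPlus a (Finset.mem_univ a)) (hcon a (Finset.mem_univ a))
          have hb' : c ptil b = c ptil aPlus :=
            le_antisymm (haPlus b (Finset.mem_univ b)) (hcon b (Finset.mem_univ b))
          exact hab (ha'.trans hb'.symm)
        obtain ⟨x, hx, hxlt⟩ := hlt
        calc (∑ a, c ptil a) < ∑ _a : A, c ptil aPlus :=
              Finset.sum_lt_sum (fun i _ => haPlus i (Finset.mem_univ i)) ⟨x, hx, hxlt⟩
          _ = (Fintype.card A : ℝ) * c ptil aPlus := by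
              rw [Finset.sum_const, Finset.card_univ, nsmul_eq_mul]
      calc (1 / (Fintype.card A : ℝ)) * ∑ a, c ptil a
          < (1 / (Fintype.card A : ℝ)) * ((Fintype.card A : ℝ) * c ptil aPlus) :=
            mul_lt_mul_of_pos_left hsum (by positivity)
        _ = c ptil aPlus := by field_simp
    have key2 : ∑ p ∈ P.erase ptil, D p * ((1 / (Fintype.card A : ℝ)) * ∑ a, c p a)
        ≤ ∑ p ∈ P.erase ptil, D p * c p (h p) := by
      have hrw : ∑ p ∈ P.erase ptil, D p * ((1 / (Fintype.card A : ℝ)) * ∑ a, c p a)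
          = (1 / (Fintype.card A : ℝ)) * ∑ a, ∑ p ∈ P.erase ptil, D p * c p a := by
        calc ∑ p ∈ P.erase ptil, D p * ((1 / (Fintype.card A : ℝ)) * ∑ a, c p a)
            = ∑ p ∈ P.erase ptil, ∑ a, (1 / (Fintype.card A : ℝ)) * (D p * c p a) := by
              refine Finset.sum_congr rfl fun p _ => ?_
              rw [Finset.mul_sum, Finset.mul_sum]
              exact Finset.sum_congr rfl fun a _ => by ring
          _ = ∑ a, ∑ p ∈ P.erase ptil, (1 / (Fintype.card A : ℝ)) * (D p * c p a) :=
              Finset.sum_comm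
          _ = (1 / (Fintype.card A : ℝ)) * ∑ a, ∑ p ∈ P.erase ptil, D p * c p a := by
              rw [Finset.mul_sum]
              exact Finset.sum_congr rfl fun a _ => (Finset.mul_sum _ _ _).symm
      rw [hrw]
      have hle : (1 / (Fintype.card A : ℝ)) * ∑ a, ∑ p ∈ P.erase ptil, D p * c p a
          ≤ (1 / (Fintype.card A : ℝ)) * ∑ _a : A, ∑ p ∈ P.erase ptil, D p * c p aMinus := by
        refine mul_le_mul_of_nonneg_left ?_ (by positivity)
        exact Finset.sum_le_sum fun a _ => haMinus a (Finset.mem_univ a)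
      refine hle.trans (le_of_eq ?_)
      rw [Finset.sum_const, Finset.card_univ, nsmul_eq_mul]
      rw [← mul_assoc, one_div, inv_mul_cancel₀ (ne_of_gt hcard), one_mul]
      exact Finset.sum_congr rfl fun p hp => by rw [hhq p hp]
    exact add_lt_add_of_lt_of_le key1 key2
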